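/- Let g_A ∈ (0,1), let π_A, π_B ∈ [0,1] with π_B ≤ π_A and π_B < 1, and let u₁ ≥ 0 ≥ u₀. If g_A·u₁ + (1−g_A)·u₀ ≥ 0, then the policy τ* given by τ*(1,A) = 1, τ*(0,A) = 0, τ*(1,B) = 1, τ*(0,B) = (π_A − π_B)/(1 − π_B) satisfies demographic parity, and U(τ*) ≥ U(τ) for every policy τ satisfying demographic parity. -/
import Mathlib


open Filter Set Topology

/-- Proposition: AA2 / over-acceptance case.
Policies are maps `τ : Bool → Bool → ℝ`, where `τ v j` is the selection probability of an
individual with qualification `v` (`true` = qualified) in group `j` (`true` = A, `false` = B).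
If `g_A·u₁ + (1−g_A)·u₀ ≥ 0` then the policy
`τ*(1,A) = 1, τ*(0,A) = 0, τ*(1,B) = 1, τ*(0,B) = (π_A − π_B)/(1 − π_B)`
satisfies demographic parity and maximizes the institutional utility among all
demographic-parity policies. -/
theorem AA2_policy_optimal
    (gA πA πB u₁ u₀ : ℝ)
    (hgA : gA ∈ Set.Ioo (0:ℝ) 1)
    (hπA : πA ∈ Set.Icc (0:ℝ) 1) (hπB : πB ∈ Set.Icc (0:ℝ) 1)
    (hBA : πB ≤ πA) (hBlt : πB < 1)
    (hu1 : 0 ≤ u₁) (hu0 : u₀ ≤ 0)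
    (hAA2 : 0 ≤ gA * u₁ + (1 - gA) * u₀) :
    -- τ* satisfies demographic parity
    (1 * πA + 0 * (1 - πA) = 1 * πB + ((πA - πB) / (1 - πB)) * (1 - πB)) ∧
    -- and U(τ*) ≥ U(τ) for every policy τ satisfying demographic parity
    (∀ τ : Bool → Bool → ℝ,
      (∀ v j, τ v j ∈ Set.Icc (0:ℝ) 1) →
      (τ true true * πA + τ false true * (1 - πA)
        = τ true false * πB + τ false false * (1 - πB)) →
      gA * (u₁ * τ true true * πA + u₀ * τ false true * (1 - πA))
          + (1 - gA) * (u₁ * τ true false * πB + u₀ * τ false false * (1 - πB))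
        ≤ gA * (u₁ * 1 * πA + u₀ * 0 * (1 - πA))
          + (1 - gA) * (u₁ * 1 * πB + u₀ * ((πA - πB) / (1 - πB)) * (1 - πB))) := by
  obtain ⟨hg0, hg1⟩ := hgA
  obtain ⟨hA0, hA1⟩ := hπA
  obtain ⟨hB0, hB1⟩ := hπB
  have hBne : (1 : ℝ) - πB ≠ 0 := by linarith
  have hcanc : ((πA - πB) / (1 - πB)) * (1 - πB) = πA - πB :=
    div_mul_cancel₀ _ hBne
  constructor
  · rw [hcanc]; ring
  · intro τ hτ hpar
    obtain ⟨ha0, ha1⟩ := hτ true true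
    obtain ⟨hb0, hb1⟩ := hτ false true
    obtain ⟨hc0, hc1⟩ := hτ true false
    obtain ⟨hd0, hd1⟩ := hτ false false
    set a := τ true true
    set b := τ false true
    set c := τ true false
    set d := τ false false
    set r := a * πA + b * (1 - πA) with hr
    clear_value a b c d r
    have hrhs : u₀ * ((πA - πB) / (1 - πB)) * (1 - πB) = u₀ * (πA - πB) := by
      rw [mul_assoc, hcanc]
    rw [hrhs]
    -- basic nonneg facts
    have hb' : 0 ≤ b * (1 - πA) := mul_nonneg hb0 (by linarith)
    have hd' : 0 ≤ d * (1 - πB) := mul_nonneg hd0 (by linarith)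
    have haA : a * πA ≤ πA := by nlinarith
    have hcB : c * πB ≤ πB := by nlinarith
    have haR : a * πA ≤ r := by simp [hr]; linarith
    have hcR : c * πB ≤ r := by rw [hpar]; linarith
    -- bound each term
    have h1 : u₁ * a * πA ≤ u₁ * min r πA := by
      rw [mul_assoc]
      exact mul_le_mul_of_nonneg_left (le_min haR haA) hu1
    have h2 : u₀ * b * (1 - πA) ≤ u₀ * max (r - πA) 0 := by
      rw [mul_assoc]
      apply mul_le_mul_of_nonpos_left _ hu0
      exact max_le (by simp [hr]; nlinarith) hb'
    have h3 : u₁ * c * πB ≤ u₁ * min r πB := by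
      rw [mul_assoc]
      exact mul_le_mul_of_nonneg_left (le_min hcR hcB) hu1
    have h4 : u₀ * d * (1 - πB) ≤ u₀ * max (r - πB) 0 := by
      rw [mul_assoc]
      apply mul_le_mul_of_nonpos_left _ hu0
      apply max_le _ hd'
      nlinarith [hpar, hcB]
    have hstep : gA * (u₁ * a * πA + u₀ * b * (1 - πA))
          + (1 - gA) * (u₁ * c * πB + u₀ * d * (1 - πB))
        ≤ gA * (u₁ * min r πA + u₀ * max (r - πA) 0)
          + (1 - gA) * (u₁ * min r πB + u₀ * max (r - πB) 0) := by
      have k1 := mul_le_mul_of_nonneg_left (add_le_add h1 h2) hg0.le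
      have k2 := mul_le_mul_of_nonneg_left (add_le_add h3 h4)
        (by linarith : (0:ℝ) ≤ 1 - gA)
      linarith
    refine hstep.trans ?_
    clear hstep h1 h2 h3 h4 haR hcR haA hcB hb' hd' hrhs hpar hr hcanc hτ
    clear ha0 ha1 hb0 hb1 hc0 hc1 hd0 hd1 a b c d τ
    rcases le_total r πB with hrB | hrB
    · have hrA : r ≤ πA := hrB.trans hBA
      rw [min_eq_left hrA, min_eq_left hrB, max_eq_right (by linarith),
        max_eq_right (by linarith)]
      nlinarith [mul_nonneg (sub_nonneg.2 hBA) hAA2, mul_nonneg hu1 (sub_nonneg.2 hrB),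
        mul_nonneg hg0.le (mul_nonneg hu1 (sub_nonneg.2 (hrB.trans hBA)))]
    · rcases le_total r πA with hrA | hrA
      · rw [min_eq_left hrA, min_eq_right hrB, max_eq_right (by linarith),
          max_eq_left (by linarith)]
        nlinarith [mul_nonneg (sub_nonneg.2 hrA) hAA2]
      · rw [min_eq_right hrA, min_eq_right (hBA.trans hrA), max_eq_left (by linarith),
          max_eq_left (by linarith)]
        nlinarith [mul_nonpos_of_nonpos_of_nonneg hu0 (sub_nonneg.2 hrA)]
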